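/- Let x have digit sequence (a_i) ∈ ℕ^ℕ with empirical digit frequencies f_{n,k}/n → p_k for each fixed k (where p_k > 0, ∑ p_k = 1). Let (q_k), (r_k) be positive sequences with q_k, r_k < 1, such that lim_{k→∞} (log q_k)/(log r_k) = s ∈ (0, ∞) and ∑_k p_k (−log r_k) = ∞. Then lim_{n→∞} (∑_{i=1}^n log q_{a_i}) / (∑_{i=1}^n log r_{a_i}) = s. -/

import Mathlib

open Filter

private lemma fiber_sum_le (a : ℕ → ℕ) (h : ℕ → ℝ) (hh : ∀ i, 0 ≤ h i) (n K : ℕ) :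
    ∑ k ∈ Finset.Icc 1 K, ∑ i ∈ (Finset.Icc 1 n).filter (fun i => a i = k), h i
      ≤ ∑ i ∈ Finset.Icc 1 n, h i := by
  rw [Finset.sum_fiberwise_eq_sum_filter]
  exact Finset.sum_le_sum_of_subset_of_nonneg (Finset.filter_subset _ _)
    (fun i _ _ => hh i)

private lemma T_pos (a : ℕ → ℕ) (ha : ∀ i, 1 ≤ a i) (r : ℕ → ℝ)
    (hr : ∀ k, 1 ≤ k → 0 < r k ∧ r k < 1) {n : ℕ} (hn : 1 ≤ n) :
    0 < ∑ i ∈ Finset.Icc 1 n, -Real.log (r (a i)) := by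
  apply Finset.sum_pos
  · intro i _
    have h := hr (a i) (ha i)
    have : Real.log (r (a i)) < 0 := Real.log_neg h.1 h.2
    linarith
  · exact ⟨1, Finset.mem_Icc.2 ⟨le_refl 1, hn⟩⟩

private lemma logr_neg (r : ℕ → ℝ) (hr : ∀ k, 1 ≤ k → 0 < r k ∧ r k < 1)
    {k : ℕ} (hk : 1 ≤ k) : Real.log (r k) < 0 :=
  Real.log_neg (hr k hk).1 (hr k hk).2

/-- The key growth lemma: the Birkhoff sum of `-log r` grows superlinearly. -/
private lemma T_superlinear (a : ℕ → ℕ) (ha : ∀ i, 1 ≤ a i)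
    (p : ℕ → ℝ) (hp : ∀ k, 1 ≤ k → 0 < p k)
    (hfreq : ∀ k, 1 ≤ k →
      Tendsto (fun n : ℕ =>
          (((Finset.Icc 1 n).filter (fun i => a i = k)).card : ℝ) / (n : ℝ))
        atTop (nhds (p k)))
    (r : ℕ → ℝ) (hr : ∀ k, 1 ≤ k → 0 < r k ∧ r k < 1)
    (hdiv : ¬ Summable (fun k => p (k + 1) * (-Real.log (r (k + 1))))) :
    Tendsto (fun n : ℕ => (∑ i ∈ Finset.Icc 1 n, -Real.log (r (a i))) / n)
      atTop atTop := by
  rw [tendsto_atTop]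
  intro b
  have hnn : ∀ k, 0 ≤ p (k + 1) * (-Real.log (r (k + 1))) := by
    intro k
    have h1 := (hp (k + 1) (Nat.le_add_left 1 k)).le
    have h2 := logr_neg r hr (Nat.le_add_left 1 k)
    nlinarith
  have hps := (not_summable_iff_tendsto_nat_atTop_of_nonneg hnn).1 hdiv
  obtain ⟨K, hK⟩ := (tendsto_atTop.1 hps (b + 1)).exists
  -- rewrite the range sum as an Icc sum
  have hre : ∑ i ∈ Finset.range K, p (i + 1) * (-Real.log (r (i + 1)))
      = ∑ k ∈ Finset.Icc 1 K, p k * (-Real.log (r k)) := by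
    rw [← Finset.Ico_add_one_right_eq_Icc, Finset.sum_Ico_eq_sum_range]
    simp [add_comm 1]
  set M := ∑ k ∈ Finset.Icc 1 K, p k * (-Real.log (r k)) with hM
  have hbM : b < M := by rw [← hre]; linarith
  -- frequency sums converge to M
  have hF : Tendsto (fun n : ℕ => ∑ k ∈ Finset.Icc 1 K,
      ((((Finset.Icc 1 n).filter (fun i => a i = k)).card : ℝ) / n) * (-Real.log (r k)))
      atTop (nhds M) := by
    apply tendsto_finset_sum
    intro k hk
    exact Tendsto.mul_const _ (hfreq k (Finset.mem_Icc.1 hk).1)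
  have hev : ∀ᶠ n : ℕ in atTop, b < ∑ k ∈ Finset.Icc 1 K,
      ((((Finset.Icc 1 n).filter (fun i => a i = k)).card : ℝ) / n) * (-Real.log (r k)) :=
    hF.eventually (eventually_gt_nhds hbM)
  filter_upwards [hev, eventually_ge_atTop 1] with n hn hn1
  have hnpos : (0 : ℝ) < n := by exact_mod_cast hn1
  -- the frequency sum is at most T n / n
  have key : ∑ k ∈ Finset.Icc 1 K,
      ((((Finset.Icc 1 n).filter (fun i => a i = k)).card : ℝ) / n) * (-Real.log (r k))
      ≤ (∑ i ∈ Finset.Icc 1 n, -Real.log (r (a i))) / n := by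
    have h1 : ∀ k ∈ Finset.Icc 1 K,
        (((((Finset.Icc 1 n).filter (fun i => a i = k)).card : ℝ)) * (-Real.log (r k)))
        = ∑ i ∈ (Finset.Icc 1 n).filter (fun i => a i = k), -Real.log (r (a i)) := by
      intro k _
      rw [Finset.sum_congr rfl (fun i hi => by
        rw [(Finset.mem_filter.1 hi).2])]
      rw [Finset.sum_const, nsmul_eq_mul]
    calc ∑ k ∈ Finset.Icc 1 K,
        ((((Finset.Icc 1 n).filter (fun i => a i = k)).card : ℝ) / n) * (-Real.log (r k))
        = (∑ k ∈ Finset.Icc 1 K,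
            ((((Finset.Icc 1 n).filter (fun i => a i = k)).card : ℝ)) * (-Real.log (r k))) / n := by
          rw [Finset.sum_div]
          exact Finset.sum_congr rfl (fun k _ => by ring)
      _ = (∑ k ∈ Finset.Icc 1 K,
            ∑ i ∈ (Finset.Icc 1 n).filter (fun i => a i = k), -Real.log (r (a i))) / n := by
          rw [Finset.sum_congr rfl h1]
      _ ≤ (∑ i ∈ Finset.Icc 1 n, -Real.log (r (a i))) / n := by
          apply div_le_div_of_nonneg_right _ hnpos.le
          exact fiber_sum_le a _ (fun i => by
            have := logr_neg r hr (ha i); linarith) n K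
  linarith [key]

theorem birkhoff_ratio_tendsto_decay_ratio (a : ℕ → ℕ) (ha : ∀ i, 1 ≤ a i)
    (p : ℕ → ℝ) (hp : ∀ k, 1 ≤ k → 0 < p k) (hpsum : HasSum (fun k => p (k + 1)) 1)
    (hfreq : ∀ k, 1 ≤ k →
      Tendsto (fun n : ℕ =>
          (((Finset.Icc 1 n).filter (fun i => a i = k)).card : ℝ) / (n : ℝ))
        atTop (nhds (p k)))
    (q r : ℕ → ℝ) (hq : ∀ k, 1 ≤ k → 0 < q k ∧ q k < 1)
    (hr : ∀ k, 1 ≤ k → 0 < r k ∧ r k < 1)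
    (s : ℝ) (hs : 0 < s)
    (hratio : Tendsto (fun k => Real.log (q k) / Real.log (r k)) atTop (nhds s))
    (hdiv : ¬ Summable (fun k => p (k + 1) * (-Real.log (r (k + 1))))) :
    Tendsto (fun n : ℕ =>
        (∑ i ∈ Finset.Icc 1 n, Real.log (q (a i))) /
        (∑ i ∈ Finset.Icc 1 n, Real.log (r (a i))))
      atTop (nhds s) := by
  have hT := T_superlinear a ha p hp hfreq r hr hdiv
  -- n / T n → 0
  have hinv : Tendsto (fun n : ℕ =>
      (n : ℝ) / (∑ i ∈ Finset.Icc 1 n, -Real.log (r (a i)))) atTop (nhds 0) := by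
    have h := hT.inv_tendsto_atTop
    have heq : (fun n : ℕ => (∑ i ∈ Finset.Icc 1 n, -Real.log (r (a i))) / ↑n)⁻¹
        = fun n : ℕ => (n : ℝ) / (∑ i ∈ Finset.Icc 1 n, -Real.log (r (a i))) := by
      funext n
      simp [Pi.inv_apply, inv_div]
    rwa [heq] at h
  rw [Metric.tendsto_atTop]
  intro ε hε
  -- choose the threshold K from hratio
  obtain ⟨K₀, hK₀⟩ := Metric.tendsto_atTop.1 hratio (ε / 2) (by positivity)
  set K := max K₀ 1 with hKdef
  set C := ∑ k ∈ Finset.Icc 1 K, |Real.log (q k) - s * Real.log (r k)| with hC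
  have hC0 : 0 ≤ C := Finset.sum_nonneg (fun k _ => abs_nonneg _)
  -- eventually C * (n / T n) < ε / 2
  have hCn : Tendsto (fun n : ℕ =>
      C * ((n : ℝ) / (∑ i ∈ Finset.Icc 1 n, -Real.log (r (a i))))) atTop (nhds 0) := by
    simpa using hinv.const_mul C
  have hev : ∀ᶠ n : ℕ in atTop,
      C * ((n : ℝ) / (∑ i ∈ Finset.Icc 1 n, -Real.log (r (a i)))) < ε / 2 :=
    hCn.eventually (eventually_lt_nhds (by positivity))
  obtain ⟨N, hN⟩ := (hev.and (eventually_ge_atTop 1)).exists_forall_of_atTop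
  refine ⟨N, fun n hn => ?_⟩
  obtain ⟨hnev, hn1⟩ := hN n hn
  set T := ∑ i ∈ Finset.Icc 1 n, -Real.log (r (a i)) with hTdef
  have hTpos : 0 < T := T_pos a ha r hr hn1
  set Q := ∑ i ∈ Finset.Icc 1 n, Real.log (q (a i)) with hQ
  have hR : ∑ i ∈ Finset.Icc 1 n, Real.log (r (a i)) = -T := by
    rw [hTdef, ← Finset.sum_neg_distrib]; simp
  -- key estimate : |Q - s * (-T)| ≤ n * C + (ε/2) * T
  have hkey : |Q + s * T| ≤ n * C + (ε / 2) * T := by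
    have hsplit : Q + s * T
        = ∑ i ∈ Finset.Icc 1 n, (Real.log (q (a i)) - s * Real.log (r (a i))) := by
      rw [hQ, hTdef, Finset.mul_sum, ← Finset.sum_add_distrib]
      exact Finset.sum_congr rfl (fun i _ => by ring)
    rw [hsplit]
    calc |∑ i ∈ Finset.Icc 1 n, (Real.log (q (a i)) - s * Real.log (r (a i)))|
        ≤ ∑ i ∈ Finset.Icc 1 n, |Real.log (q (a i)) - s * Real.log (r (a i))| :=
          Finset.abs_sum_le_sum_abs _ _
      _ = (∑ i ∈ (Finset.Icc 1 n).filter (fun i => a i ≤ K),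
              |Real.log (q (a i)) - s * Real.log (r (a i))|)
          + ∑ i ∈ (Finset.Icc 1 n).filter (fun i => ¬ a i ≤ K),
              |Real.log (q (a i)) - s * Real.log (r (a i))| :=
          (Finset.sum_filter_add_sum_filter_not _ _ _).symm
      _ ≤ n * C + (ε / 2) * T := by
          gcongr ?_ + ?_
          · -- small digits part
            calc ∑ i ∈ (Finset.Icc 1 n).filter (fun i => a i ≤ K),
                  |Real.log (q (a i)) - s * Real.log (r (a i))|
                ≤ ((Finset.Icc 1 n).filter (fun i => a i ≤ K)).card • C := by
                  apply Finset.sum_le_card_nsmul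
                  intro i hi
                  have hik : a i ∈ Finset.Icc 1 K :=
                    Finset.mem_Icc.2 ⟨ha i, (Finset.mem_filter.1 hi).2⟩
                  exact Finset.single_le_sum (f := fun k => |Real.log (q k) - s * Real.log (r k)|)
                      (fun k _ => abs_nonneg _) hik
              _ ≤ n * C := by
                  rw [nsmul_eq_mul]
                  apply mul_le_mul_of_nonneg_right _ hC0
                  have : ((Finset.Icc 1 n).filter (fun i => a i ≤ K)).card ≤ n := by
                    calc ((Finset.Icc 1 n).filter (fun i => a i ≤ K)).card
                        ≤ (Finset.Icc 1 n).card := Finset.card_filter_le _ _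
                      _ = n := by rw [Nat.card_Icc]; omega
                  exact_mod_cast this
          · -- large digits part
            calc ∑ i ∈ (Finset.Icc 1 n).filter (fun i => ¬ a i ≤ K),
                  |Real.log (q (a i)) - s * Real.log (r (a i))|
                ≤ ∑ i ∈ (Finset.Icc 1 n).filter (fun i => ¬ a i ≤ K),
                  (ε / 2) * (-Real.log (r (a i))) := by
                  apply Finset.sum_le_sum
                  intro i hi
                  have hik : K < a i := Nat.lt_of_not_le (Finset.mem_filter.1 hi).2
                  have hiK0 : K₀ ≤ a i := le_trans (le_max_left _ _) hik.le
                  have h1 : 1 ≤ a i := ha i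
                  have hlr : Real.log (r (a i)) < 0 := logr_neg r hr h1
                  have hd := hK₀ (a i) hiK0
                  rw [Real.dist_eq] at hd
                  have heq : Real.log (q (a i)) - s * Real.log (r (a i))
                      = (Real.log (q (a i)) / Real.log (r (a i)) - s) * Real.log (r (a i)) := by
                    rw [sub_mul, div_mul_cancel₀ _ hlr.ne]
                  rw [heq, abs_mul]
                  rw [abs_of_neg hlr]
                  exact mul_le_mul hd.le (le_refl _) (by linarith) (by positivity)
              _ ≤ (ε / 2) * T := by
                  rw [← Finset.mul_sum]
                  apply mul_le_mul_of_nonneg_left _ (by positivity)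
                  apply Finset.sum_le_sum_of_subset_of_nonneg (Finset.filter_subset _ _)
                  intro i _ _
                  have := logr_neg r hr (ha i); linarith
  -- conclude
  rw [hR, Real.dist_eq]
  have hstep : Q / (-T) - s = -(Q + s * T) / T := by
    field_simp [hTpos.ne']
    ring
  rw [hstep, abs_div, abs_neg, abs_of_pos hTpos]
  have : |Q + s * T| / T ≤ (n * C + (ε / 2) * T) / T :=
    div_le_div_of_nonneg_right hkey hTpos.le
  have heq2 : (↑n * C + (ε / 2) * T) / T = C * (↑n / T) + ε / 2 := by
    field_simp [hTpos.ne']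
  rw [heq2] at this
  calc |Q + s * T| / T ≤ C * (↑n / T) + ε / 2 := this
    _ < ε / 2 + ε / 2 := by linarith [hnev]
    _ = ε := by ring
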